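/- Let A be a noetherian commutative ring, M a meager A-module, and S a multiplicative subset of A. Then the localized module S⁻¹M is a meager S⁻¹A-module. -/
import Mathlib


/-- `X` is (isomorphic to) a subquotient of the `R`-module `M`. -/
def IsSubquotientOf (R : Type u) [CommRing R]
    (X : Type x) [AddCommGroup X] [Module R X]
    (M : Type v) [AddCommGroup M] [Module R M] : Prop :=
  ∃ (N : Submodule R M) (P : Submodule R (M ⧸ N)), Nonempty (X ≃ₗ[R] P)

/-- An `R`-module `M` is meager if for every maximal ideal `𝔪` of `R`, `(R/𝔪)²` is not
isomorphic to a subquotient of `M`. -/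
def IsMeagerModule (R : Type u) [CommRing R]
    (M : Type v) [AddCommGroup M] [Module R M] : Prop :=
  ∀ 𝔪 : Ideal R, 𝔪.IsMaximal → ¬ IsSubquotientOf R ((R ⧸ 𝔪) × (R ⧸ 𝔪)) M

set_option maxHeartbeats 1000000 in
/-- Let `A` be a noetherian commutative ring, `M` a meager `A`-module and `S` a
multiplicative subset of `A`.  Then `S⁻¹M` is a meager `S⁻¹A`-module. -/
theorem isMeagerModule_localizedModule
    (A : Type u) [CommRing A] [IsNoetherianRing A]
    (M : Type v) [AddCommGroup M] [Module A M]
    (S : Submonoid A) (hM : IsMeagerModule A M) :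
    IsMeagerModule (Localization S) (LocalizedModule S M) := by
  intro 𝔪 h𝔪 hsq
  classical
  set L := Localization S with hL
  haveI : 𝔪.IsPrime := h𝔪.isPrime
  set 𝔭 : Ideal A := 𝔪.comap (algebraMap A L) with h𝔭def
  haveI h𝔭prime : 𝔭.IsPrime := Ideal.IsPrime.comap _
  obtain ⟨m, hm, h𝔭m⟩ := Ideal.exists_le_maximal 𝔭 h𝔭prime.ne_top
  refine hM m hm ?_
  obtain ⟨N', W, ⟨e⟩⟩ := hsq
  set N'' : Submodule A (LocalizedModule S M) := N'.restrictScalars A with hN''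
  let r : ((LocalizedModule S M) ⧸ N'') ≃ₗ[A] ((LocalizedModule S M) ⧸ N') :=
    Submodule.Quotient.restrictScalarsEquiv A N'
  set ψ₀ : M →ₗ[A] (LocalizedModule S M) ⧸ N'' :=
    N''.mkQ.comp (LocalizedModule.mkLinearMap S M) with hψ₀def
  set N : Submodule A M := LinearMap.ker ψ₀ with hNdef
  -- every element of the localized quotient is reachable from M up to S-scaling
  have hC : ∀ z : (LocalizedModule S M) ⧸ N'', ∃ s ∈ S, ∃ x : M, ψ₀ x = s • z := by
    intro z
    obtain ⟨u, rfl⟩ := Submodule.Quotient.mk_surjective N'' z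
    induction u using LocalizedModule.induction_on with
    | _ x s =>
      refine ⟨s, s.2, x, ?_⟩
      have h1 : (s : A) • LocalizedModule.mk x s = LocalizedModule.mk x 1 := by
        rw [LocalizedModule.smul'_mk]
        exact LocalizedModule.mk_cancel s x
      have h2 : (Submodule.Quotient.mk (LocalizedModule.mk x s) : _ ⧸ N'')
          = N''.mkQ (LocalizedModule.mk x s) := rfl
      rw [h2, ← map_smul, h1]
      simp [hψ₀def, LocalizedModule.mkLinearMap_apply]
  set b₁ : (L ⧸ 𝔪) × (L ⧸ 𝔪) := (1, 0) with hb₁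
  set b₂ : (L ⧸ 𝔪) × (L ⧸ 𝔪) := (0, 1) with hb₂
  set z₁ : (LocalizedModule S M) ⧸ N'' := r.symm ((e b₁ : W) : (LocalizedModule S M) ⧸ N') with hz₁
  set z₂ : (LocalizedModule S M) ⧸ N'' := r.symm ((e b₂ : W) : (LocalizedModule S M) ⧸ N') with hz₂
  obtain ⟨s₁, hs₁, x₁, hx₁⟩ := hC z₁
  obtain ⟨s₂, hs₂, x₂, hx₂⟩ := hC z₂
  have hu : ∀ s : A, s ∈ S → algebraMap A L s ∉ 𝔪 := by
    intro s hs hmem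
    exact h𝔪.ne_top (𝔪.eq_top_of_isUnit_mem hmem (IsLocalization.map_units L ⟨s, hs⟩))
  -- key computation
  have key : ∀ c d : A, c • x₁ + d • x₂ ∈ N → c ∈ 𝔭 ∧ d ∈ 𝔭 := by
    intro c d hcd
    have h0 : c • ψ₀ x₁ + d • ψ₀ x₂ = 0 := by
      rw [← map_smul, ← map_smul, ← map_add]
      rwa [hNdef, LinearMap.mem_ker] at hcd
    rw [hx₁, hx₂] at h0
    have h1 : c • (s₁ • ((e b₁ : W) : (LocalizedModule S M) ⧸ N'))
        + d • (s₂ • ((e b₂ : W) : (LocalizedModule S M) ⧸ N')) = 0 := by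
      have := congrArg r h0
      simpa [map_add, map_smul, hz₁, hz₂] using this
    have h2 : ((algebraMap A L c * algebraMap A L s₁) • (e b₁) +
        (algebraMap A L d * algebraMap A L s₂) • (e b₂) : W) = 0 := by
      have hcoe : (((algebraMap A L c * algebraMap A L s₁) • (e b₁) +
          (algebraMap A L d * algebraMap A L s₂) • (e b₂) : W) :
            (LocalizedModule S M) ⧸ N') = 0 := by
        rw [Submodule.coe_add, SetLike.val_smul, SetLike.val_smul, mul_smul, mul_smul,
          algebraMap_smul, algebraMap_smul, algebraMap_smul, algebraMap_smul]
        exact h1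
      exact ZeroMemClass.coe_eq_zero.mp hcoe
    have h3 : (algebraMap A L c * algebraMap A L s₁) • b₁ +
        (algebraMap A L d * algebraMap A L s₂) • b₂ = 0 := by
      rw [← LinearEquiv.map_eq_zero_iff e, map_add, map_smul, map_smul]
      exact h2
    have h4 : ∀ l : L, l • (1 : L ⧸ 𝔪) = Ideal.Quotient.mk 𝔪 l := by
      intro l
      have h5 : (1 : L ⧸ 𝔪) = Submodule.Quotient.mk (1 : L) := rfl
      rw [h5, ← Submodule.Quotient.mk_smul, smul_eq_mul, mul_one]
      rfl
    have hsum : (algebraMap A L c * algebraMap A L s₁) • b₁ +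
        (algebraMap A L d * algebraMap A L s₂) • b₂ =
        ((algebraMap A L c * algebraMap A L s₁) • (1 : L ⧸ 𝔪),
         (algebraMap A L d * algebraMap A L s₂) • (1 : L ⧸ 𝔪)) := by
      simp [hb₁, hb₂, Prod.ext_iff]
    rw [hsum, Prod.mk_eq_zero] at h3
    obtain ⟨h31, h32⟩ := h3
    rw [h4] at h31 h32
    rw [Ideal.Quotient.eq_zero_iff_mem] at h31 h32
    constructor
    · rcases h𝔪.isPrime.mem_or_mem h31 with h | h
      · exact h
      · exact absurd h (hu s₁ hs₁)
    · rcases h𝔪.isPrime.mem_or_mem h32 with h | h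
      · exact h
      · exact absurd h (hu s₂ hs₂)
  -- the subquotient of M
  set p₁ : M ⧸ N := N.mkQ x₁ with hp₁
  set p₂ : M ⧸ N := N.mkQ x₂ with hp₂
  set h : A × A →ₗ[A] M ⧸ N :=
    (LinearMap.toSpanSingleton A _ p₁).coprod (LinearMap.toSpanSingleton A _ p₂) with hhdef
  have hh_apply : ∀ a b : A, h (a, b) = N.mkQ (a • x₁ + b • x₂) := by
    intro a b
    simp [hhdef, LinearMap.coprod_apply, LinearMap.toSpanSingleton_apply, hp₁, hp₂, map_add,
      map_smul]
  set N₂ : Submodule A (M ⧸ N) := (Submodule.prod m m).map h with hN₂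
  set Nstar : Submodule A M := N₂.comap N.mkQ with hNstar
  have hNle : N ≤ Nstar := by
    intro x hx
    simp only [hNstar, Submodule.mem_comap]
    have hx0 : N.mkQ x = 0 := by
      rw [Submodule.mkQ_apply, Submodule.Quotient.mk_eq_zero]; exact hx
    rw [hx0]; exact N₂.zero_mem
  set t : (M ⧸ N) →ₗ[A] M ⧸ Nstar :=
    Submodule.mapQ N Nstar LinearMap.id (by rwa [Submodule.comap_id]) with htdef
  set Φ : A × A →ₗ[A] M ⧸ Nstar := t.comp h with hΦdef
  have hΦ_apply : ∀ a b : A, Φ (a, b) = Nstar.mkQ (a • x₁ + b • x₂) := by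
    intro a b
    rw [hΦdef, LinearMap.comp_apply, hh_apply, htdef, Submodule.mkQ_apply,
      Submodule.mapQ_apply, LinearMap.id_apply, Submodule.mkQ_apply]
  have hker : ∀ a b : A, Φ (a, b) = 0 ↔ a ∈ m ∧ b ∈ m := by
    intro a b
    rw [hΦ_apply, Submodule.mkQ_apply, Submodule.Quotient.mk_eq_zero, hNstar,
      Submodule.mem_comap]
    constructor
    · intro hmem
      rw [← hh_apply] at hmem
      rw [hN₂, Submodule.mem_map] at hmem
      obtain ⟨⟨a', b'⟩, hab', heq⟩ := hmem
      rw [Submodule.mem_prod] at hab'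
      have hsub : h (a - a', b - b') = 0 := by
        have : ((a, b) : A × A) - (a', b') = (a - a', b - b') := rfl
        rw [← this, map_sub, heq, sub_self]
      rw [hh_apply, Submodule.mkQ_apply, Submodule.Quotient.mk_eq_zero] at hsub
      obtain ⟨hc, hd⟩ := key _ _ hsub
      constructor
      · have := m.add_mem (h𝔭m hc) hab'.1
        rwa [sub_add_cancel] at this
      · have := m.add_mem (h𝔭m hd) hab'.2
        rwa [sub_add_cancel] at this
    · rintro ⟨ha, hb⟩
      rw [← hh_apply, hN₂]
      exact Submodule.mem_map_of_mem (Submodule.mem_prod.mpr ⟨ha, hb⟩)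
  set q₁ : M ⧸ Nstar := Φ (1, 0) with hq₁
  set q₂ : M ⧸ Nstar := Φ (0, 1) with hq₂
  have hΦab : ∀ a b : A, Φ (a, b) = a • q₁ + b • q₂ := by
    intro a b
    have hsplit : ((a, b) : A × A) = a • (1, 0) + b • (0, 1) := by
      simp [Prod.ext_iff]
    rw [hsplit, map_add, map_smul, map_smul, hq₁, hq₂]
  have hm₁ : m ≤ LinearMap.ker (LinearMap.toSpanSingleton A (M ⧸ Nstar) q₁) := by
    intro a ha
    rw [LinearMap.mem_ker, LinearMap.toSpanSingleton_apply]
    have h0 : Φ (a, 0) = 0 := (hker a 0).mpr ⟨ha, m.zero_mem⟩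
    rw [hΦab] at h0
    simpa using h0
  have hm₂ : m ≤ LinearMap.ker (LinearMap.toSpanSingleton A (M ⧸ Nstar) q₂) := by
    intro a ha
    rw [LinearMap.mem_ker, LinearMap.toSpanSingleton_apply]
    have h0 : Φ (0, a) = 0 := (hker 0 a).mpr ⟨m.zero_mem, ha⟩
    rw [hΦab] at h0
    simpa using h0
  set Θ : (A ⧸ m) × (A ⧸ m) →ₗ[A] M ⧸ Nstar :=
    (m.liftQ (LinearMap.toSpanSingleton A (M ⧸ Nstar) q₁) hm₁).coprod
      (m.liftQ (LinearMap.toSpanSingleton A (M ⧸ Nstar) q₂) hm₂) with hΘdef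
  have hΘ_apply : ∀ a b : A,
      Θ (Submodule.Quotient.mk a, Submodule.Quotient.mk b) = Φ (a, b) := by
    intro a b
    rw [hΘdef, LinearMap.coprod_apply, Submodule.liftQ_apply, Submodule.liftQ_apply,
      LinearMap.toSpanSingleton_apply, LinearMap.toSpanSingleton_apply, hΦab]
  have hΘinj : Function.Injective Θ := by
    rw [← LinearMap.ker_eq_bot, Submodule.eq_bot_iff]
    rintro ⟨va, vb⟩ hv
    rw [LinearMap.mem_ker] at hv
    obtain ⟨a, rfl⟩ := Submodule.Quotient.mk_surjective m va
    obtain ⟨b, rfl⟩ := Submodule.Quotient.mk_surjective m vb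
    rw [hΘ_apply] at hv
    obtain ⟨ha, hb⟩ := (hker a b).mp hv
    rw [Prod.ext_iff]
    constructor
    · rw [Prod.fst_zero, Submodule.Quotient.mk_eq_zero]; exact ha
    · rw [Prod.snd_zero, Submodule.Quotient.mk_eq_zero]; exact hb
  exact ⟨Nstar, LinearMap.range Θ, ⟨LinearEquiv.ofInjective Θ hΘinj⟩⟩
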